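/- Let G be a graph and let G' be obtained from G by adding a set U of new vertices, arbitrary edges between V(G) and U, and for each u ∈ U a new pendant twin vertex u' adjacent only to u (in particular no edges inside U). Then the maximum matching size of G' equals the maximum matching size of G plus |U|. -/

import Mathlib

open scoped Classical

variable {V U : Type*}

/-- The graph obtained from `G` by adding a layer `U` of new vertices, edges between
`V(G)` and `U` (vertex `u ∈ U` is joined to the vertices in `B u`), and for each `u ∈ U`
a pendant twin vertex adjacent only to `u`.  The vertex type is `V ⊕ U ⊕ U`, where the
first `U`-summand is the layer and the second consists of the twins. -/
def addLayerWithTwins (G : SimpleGraph V) (B : U → Finset V) :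
    SimpleGraph (V ⊕ U ⊕ U) where
  Adj x y :=
    match x, y with
    | Sum.inl v, Sum.inl w => G.Adj v w
    | Sum.inl v, Sum.inr (Sum.inl u) => v ∈ B u
    | Sum.inr (Sum.inl u), Sum.inl v => v ∈ B u
    | Sum.inr (Sum.inl u), Sum.inr (Sum.inr u') => u = u'
    | Sum.inr (Sum.inr u'), Sum.inr (Sum.inl u) => u = u'
    | _, _ => False
  symm := by
    constructor
    rintro (v | u | u) (w | w' | w') h <;>
      first | exact G.adj_symm h | exact h | exact h.symm | exact h.elim
  loopless := by
    constructor
    rintro (v | u | u) h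
    · exact G.irrefl h
    · exact h
    · exact h

/-- Maximum cardinality of a matching. -/
noncomputable def MCM {W : Type*} (G : SimpleGraph W) : ℕ :=
  sSup { n : ℕ | ∃ M : G.Subgraph, M.IsMatching ∧ M.edgeSet.ncard = n }

section helpers

variable {W : Type*} [Fintype W] (H : SimpleGraph W)

lemma mcm_set_nonempty :
    { n : ℕ | ∃ M : H.Subgraph, M.IsMatching ∧ M.edgeSet.ncard = n }.Nonempty :=
  ⟨0, ⊥, by intro v hv; simp at hv, by simp⟩

lemma mcm_set_bddAbove :
    BddAbove { n : ℕ | ∃ M : H.Subgraph, M.IsMatching ∧ M.edgeSet.ncard = n } := by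
  refine ⟨Fintype.card (Sym2 W), ?_⟩
  rintro n ⟨M, -, rfl⟩
  calc M.edgeSet.ncard ≤ (Set.univ : Set (Sym2 W)).ncard :=
        Set.ncard_le_ncard (Set.subset_univ _) Set.finite_univ
    _ = Fintype.card (Sym2 W) := by simp [Set.ncard_univ, Nat.card_eq_fintype_card]

lemma le_MCM {M : H.Subgraph} (hM : M.IsMatching) : M.edgeSet.ncard ≤ MCM H :=
  le_csSup (mcm_set_bddAbove H) ⟨M, hM, rfl⟩

lemma MCM_spec : ∃ M : H.Subgraph, M.IsMatching ∧ M.edgeSet.ncard = MCM H :=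
  Nat.sSup_mem (mcm_set_nonempty H) (mcm_set_bddAbove H)

end helpers

section constructions

variable (G : SimpleGraph V) (B : U → Finset V)

/-- Extension of a matching of `G` to the layered graph, adding all twin edges. -/
noncomputable def extMatch (M : G.Subgraph) : (addLayerWithTwins G B).Subgraph where
  verts := Sum.inl '' M.verts ∪ Set.range Sum.inr
  Adj x y := (∃ v w, M.Adj v w ∧ x = Sum.inl v ∧ y = Sum.inl w) ∨
    (∃ u, x = Sum.inr (Sum.inl u) ∧ y = Sum.inr (Sum.inr u)) ∨
    (∃ u, x = Sum.inr (Sum.inr u) ∧ y = Sum.inr (Sum.inl u))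
  adj_sub := by
    rintro x y (⟨v, w, h, rfl, rfl⟩ | ⟨u, rfl, rfl⟩ | ⟨u, rfl, rfl⟩)
    · exact M.adj_sub h
    · rfl
    · rfl
  edge_vert := by
    rintro x y (⟨v, w, h, rfl, rfl⟩ | ⟨u, rfl, rfl⟩ | ⟨u, rfl, rfl⟩)
    · exact Or.inl ⟨v, M.edge_vert h, rfl⟩
    · exact Or.inr ⟨Sum.inl u, rfl⟩
    · exact Or.inr ⟨Sum.inr u, rfl⟩
  symm := by
    constructor
    rintro x y (⟨v, w, h, rfl, rfl⟩ | ⟨u, rfl, rfl⟩ | ⟨u, rfl, rfl⟩)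
    · exact Or.inl ⟨w, v, M.adj_symm h, rfl, rfl⟩
    · exact Or.inr (Or.inr ⟨u, rfl, rfl⟩)
    · exact Or.inr (Or.inl ⟨u, rfl, rfl⟩)

lemma extMatch_isMatching {M : G.Subgraph} (hM : M.IsMatching) :
    (extMatch G B M).IsMatching := by
  rintro x (⟨v, hv, rfl⟩ | ⟨(u | u), rfl⟩)
  · obtain ⟨w, hw, huniq⟩ := hM hv
    refine ⟨Sum.inl w, Or.inl ⟨v, w, hw, rfl, rfl⟩, ?_⟩
    rintro y (⟨v', w', h', hv', rfl⟩ | ⟨u, hx, rfl⟩ | ⟨u, hx, rfl⟩)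
    · obtain rfl : v = v' := by injection hv'
      rw [huniq w' h']
    · exact absurd hx (by simp)
    · exact absurd hx (by simp)
  · refine ⟨Sum.inr (Sum.inr u), Or.inr (Or.inl ⟨u, rfl, rfl⟩), ?_⟩
    rintro y (⟨v', w', h', hv', rfl⟩ | ⟨u', hx, rfl⟩ | ⟨u', hx, rfl⟩)
    · exact absurd hv' (by simp)
    · obtain rfl : u = u' := by simpa using hx
      rfl
    · exact absurd hx (by simp)
  · refine ⟨Sum.inr (Sum.inl u), Or.inr (Or.inr ⟨u, rfl, rfl⟩), ?_⟩
    rintro y (⟨v', w', h', hv', rfl⟩ | ⟨u', hx, rfl⟩ | ⟨u', hx, rfl⟩)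
    · exact absurd hv' (by simp)
    · exact absurd hx (by simp)
    · obtain rfl : u = u' := by simpa using hx
      rfl

lemma extMatch_edgeSet (M : G.Subgraph) : (extMatch G B M).edgeSet =
    Sym2.map Sum.inl '' M.edgeSet ∪
      Set.range (fun u : U => s(Sum.inr (Sum.inl u), Sum.inr (Sum.inr u))) := by
  ext e
  induction e with
  | _ x y =>
    rw [SimpleGraph.Subgraph.mem_edgeSet]
    constructor
    · rintro (⟨v, w, h, rfl, rfl⟩ | ⟨u, rfl, rfl⟩ | ⟨u, rfl, rfl⟩)
      · exact Or.inl ⟨s(v, w), SimpleGraph.Subgraph.mem_edgeSet.mpr h, rfl⟩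
      · exact Or.inr ⟨u, rfl⟩
      · exact Or.inr ⟨u, Sym2.eq_swap⟩
    · rintro (⟨e', he', heq⟩ | ⟨u, hu⟩)
      · induction e' with
        | _ v w =>
          rw [Sym2.map_pair_eq, Sym2.eq_iff] at heq
          rcases heq with ⟨rfl, rfl⟩ | ⟨rfl, rfl⟩
          · exact Or.inl ⟨v, w, SimpleGraph.Subgraph.mem_edgeSet.mp he', rfl, rfl⟩
          · exact Or.inl ⟨w, v, M.adj_symm (SimpleGraph.Subgraph.mem_edgeSet.mp he'), rfl, rfl⟩
      · rw [Sym2.eq_iff] at hu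
        rcases hu with ⟨rfl, rfl⟩ | ⟨rfl, rfl⟩
        · exact Or.inr (Or.inl ⟨u, rfl, rfl⟩)
        · exact Or.inr (Or.inr ⟨u, rfl, rfl⟩)

lemma extMatch_ncard [Fintype V] [Fintype U] (M : G.Subgraph) :
    (extMatch G B M).edgeSet.ncard = M.edgeSet.ncard + Fintype.card U := by
  rw [extMatch_edgeSet, Set.ncard_union_eq]
  · congr 1
    · exact Set.ncard_image_of_injective _ (Sym2.map.injective Sum.inl_injective)
    · rw [← Set.image_univ, Set.ncard_image_of_injective, Set.ncard_univ,
        Nat.card_eq_fintype_card]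
      intro a b h
      rw [Sym2.eq_iff] at h
      rcases h with ⟨h1, -⟩ | ⟨h1, -⟩ <;> simpa using h1
  · rw [Set.disjoint_left]
    rintro e ⟨e', -, rfl⟩ ⟨u, hu⟩
    induction e' with
    | _ v w =>
      rw [Sym2.map_pair_eq, Sym2.eq_iff] at hu
      rcases hu with ⟨h1, -⟩ | ⟨h1, -⟩ <;> simp at h1

variable (M' : (addLayerWithTwins G B).Subgraph)

/-- Restriction of a matching of the layered graph to `G`. -/
def restrMatch : G.Subgraph where
  verts := {v | ∃ w, M'.Adj (Sum.inl v) (Sum.inl w)}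
  Adj v w := M'.Adj (Sum.inl v) (Sum.inl w)
  adj_sub h := M'.adj_sub h
  edge_vert h := ⟨_, h⟩
  symm := ⟨fun v w h => M'.adj_symm h⟩

lemma restrMatch_isMatching (hM' : M'.IsMatching) : (restrMatch G B M').IsMatching := by
  rintro v ⟨w, hw⟩
  refine ⟨w, hw, ?_⟩
  intro w' hw'
  obtain ⟨y, -, huniq⟩ := hM' (M'.edge_vert hw)
  have h1 := huniq _ hw'
  have h2 := huniq _ hw
  have := h1.trans h2.symm
  injection this

/-- The set of `Sym2` elements with both coordinates in the `V`-part. -/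
def inlEdges : Set (Sym2 (V ⊕ U ⊕ U)) := {e | ∃ v w : V, e = s(Sum.inl v, Sum.inl w)}

lemma inter_inlEdges :
    M'.edgeSet ∩ inlEdges = Sym2.map Sum.inl '' (restrMatch G B M').edgeSet := by
  ext e
  constructor
  · rintro ⟨he, v, w, rfl⟩
    exact ⟨s(v, w), SimpleGraph.Subgraph.mem_edgeSet.mpr
      (SimpleGraph.Subgraph.mem_edgeSet.mp he), rfl⟩
  · rintro ⟨e', he', rfl⟩
    induction e' with
    | _ v w =>
      exact ⟨SimpleGraph.Subgraph.mem_edgeSet.mpr (SimpleGraph.Subgraph.mem_edgeSet.mp he'),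
        v, w, rfl⟩

lemma key_layer {e : Sym2 (V ⊕ U ⊕ U)}
    (he : e ∈ M'.edgeSet) (hT : e ∉ inlEdges (U := U) (V := V)) :
    ∃ u : U, Sum.inr (Sum.inl u) ∈ e := by
  induction e with
  | _ x y =>
    have h := M'.adj_sub (SimpleGraph.Subgraph.mem_edgeSet.mp he)
    rcases x with v | u | u <;> rcases y with w | w | w
    · exact absurd ⟨v, w, rfl⟩ hT
    · exact ⟨w, by simp⟩
    · exact h.elim
    · exact ⟨u, by simp⟩
    · exact h.elim
    · exact ⟨u, by simp⟩
    · exact h.elim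
    · exact ⟨w, by simp⟩
    · exact h.elim

lemma diff_ncard_le [Fintype U] (hM' : M'.IsMatching) :
    (M'.edgeSet \ inlEdges).ncard ≤ Fintype.card U := by
  cases isEmpty_or_nonempty U with
  | inl h =>
    have : M'.edgeSet \ inlEdges (U := U) (V := V) = ∅ := by
      ext e
      simp only [Set.mem_diff, Set.mem_empty_iff_false, iff_false, not_and, not_not]
      intro he
      by_contra hT
      exact h.elim (key_layer G B M' he hT).choose
    simp [this]
  | inr h =>
    have hne : Nonempty U := h
    set f : Sym2 (V ⊕ U ⊕ U) → U := fun e =>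
      if hu : ∃ u : U, Sum.inr (Sum.inl u) ∈ e then hu.choose else Classical.arbitrary U
      with hf
    have hmem : ∀ e ∈ M'.edgeSet \ inlEdges, Sum.inr (Sum.inl (f e)) ∈ e := by
      rintro e ⟨he, hT⟩
      have hu := key_layer G B M' he hT
      simp only [hf, dif_pos hu]
      exact hu.choose_spec
    have : (M'.edgeSet \ inlEdges).ncard ≤ (Set.univ : Set U).ncard := by
      refine Set.ncard_le_ncard_of_injOn f (fun _ _ => Set.mem_univ _) ?_ Set.finite_univ
      intro e1 he1 e2 he2 hfe
      have h1 := hmem e1 he1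
      have h2 := hmem e2 he2
      rw [hfe] at h1
      obtain ⟨y, -, huniq⟩ := hM' (M'.edge_vert
        (SimpleGraph.Subgraph.mem_edgeSet.mp ((Sym2.other_spec h2) ▸ he2.1)))
      have e1eq := Sym2.other_spec h1
      have e2eq := Sym2.other_spec h2
      have a1 := huniq _ (SimpleGraph.Subgraph.mem_edgeSet.mp (e1eq.symm ▸ he1.1))
      have a2 := huniq _ (SimpleGraph.Subgraph.mem_edgeSet.mp (e2eq.symm ▸ he2.1))
      calc e1 = s(Sum.inr (Sum.inl (f e2)), Sym2.Mem.other h1) := e1eq.symm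
        _ = s(Sum.inr (Sum.inl (f e2)), Sym2.Mem.other h2) := by rw [a1, a2]
        _ = e2 := e2eq
    simpa [Set.ncard_univ, Nat.card_eq_fintype_card] using this

end constructions

/-- Adding a layer `U` with arbitrary edges to `V(G)` plus a pendant twin for each
vertex of `U` increases the maximum matching size by exactly `|U|`. -/
theorem MCM_addLayerWithTwins [Fintype V] [Fintype U]
    (G : SimpleGraph V) (B : U → Finset V) :
    MCM (addLayerWithTwins G B) = MCM G + Fintype.card U := by
  apply le_antisymm
  · obtain ⟨M', hM', hcard⟩ := MCM_spec (addLayerWithTwins G B)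
    rw [← hcard]
    have hsplit : M'.edgeSet = (M'.edgeSet ∩ inlEdges) ∪ (M'.edgeSet \ inlEdges) :=
      (Set.inter_union_diff _ _).symm
    rw [hsplit, Set.ncard_union_eq (Set.disjoint_left.mpr fun _ he h2 => h2.2 he.2)]
    have h1 : (M'.edgeSet ∩ inlEdges).ncard ≤ MCM G := by
      rw [inter_inlEdges, Set.ncard_image_of_injective _ (Sym2.map.injective Sum.inl_injective)]
      exact le_MCM G (restrMatch_isMatching G B M' hM')
    exact add_le_add h1 (diff_ncard_le G B M' hM')
  · obtain ⟨M, hM, hcard⟩ := MCM_spec G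
    rw [← hcard, ← extMatch_ncard G B M]
    exact le_MCM _ (extMatch_isMatching G B hM)
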